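/- Let Ω = [0,L] with L > 0 and let φ : Ω → ℝ be twice continuously differentiable and L-periodic (so that φ(0)=φ(L) and φ'(0)=φ'(L)). Then ‖φ'‖²_{L²} ≤ L·‖φ''‖²_{L¹} + (4/L)·‖φ‖_{L¹}·‖φ''‖_{L¹}. -/

import Mathlib

open MeasureTheory Set intervalIntegral

theorem deriv_L2_interpolation_bound (L : ℝ) (hL : 0 < L) (φ : ℝ → ℝ)
    (hφ : ContDiffOn ℝ 2 φ (Icc 0 L))
    (hper : φ 0 = φ L)
    (hper' : derivWithin φ (Icc 0 L) 0 = derivWithin φ (Icc 0 L) L) :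
    (∫ x in (0:ℝ)..L, (derivWithin φ (Icc 0 L) x) ^ 2)
      ≤ L * (∫ x in (0:ℝ)..L, |derivWithin (derivWithin φ (Icc 0 L)) (Icc 0 L) x|) ^ 2
        + (4 / L) * (∫ x in (0:ℝ)..L, |φ x|)
            * (∫ x in (0:ℝ)..L, |derivWithin (derivWithin φ (Icc 0 L)) (Icc 0 L) x|) := by
  set I := Icc (0:ℝ) L with hIdef
  have hI : UniqueDiffOn ℝ I := uniqueDiffOn_Icc hL
  set ψ := derivWithin φ I with hψdef
  set ψ' := derivWithin ψ I with hψ'def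
  have hψ1 : ContDiffOn ℝ 1 ψ I := hφ.derivWithin hI (by norm_num)
  have hψ'0 : ContDiffOn ℝ 0 ψ' I := hψ1.derivWithin hI (by norm_num)
  have hψ'c : ContinuousOn ψ' I := hψ'0.continuousOn
  have hψc : ContinuousOn ψ I := hψ1.continuousOn
  have hφc : ContinuousOn φ I := hφ.continuousOn
  have hφd : ∀ x ∈ I, HasDerivWithinAt φ (ψ x) I x := fun x hx =>
    ((hφ.differentiableOn (by norm_num)) x hx).hasDerivWithinAt
  have hψd : ∀ x ∈ I, HasDerivWithinAt ψ (ψ' x) I x := fun x hx =>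
    ((hψ1.differentiableOn (by norm_num)) x hx).hasDerivWithinAt
  have huIcc : uIcc (0:ℝ) L = I := uIcc_of_le hL.le
  have hiψ : IntervalIntegrable ψ volume 0 L := by
    apply ContinuousOn.intervalIntegrable; rwa [huIcc]
  have hiψ' : IntervalIntegrable ψ' volume 0 L := by
    apply ContinuousOn.intervalIntegrable; rwa [huIcc]
  have hiφ : IntervalIntegrable φ volume 0 L := by
    apply ContinuousOn.intervalIntegrable; rwa [huIcc]
  -- notation
  set A := ∫ x in (0:ℝ)..L, |ψ' x| with hA
  set B := ∫ x in (0:ℝ)..L, |φ x| with hB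
  set C := ∫ x in (0:ℝ)..L, |ψ x| with hC
  set X := ∫ x in (0:ℝ)..L, (ψ x) ^ 2 with hX
  have hiaψ : IntervalIntegrable (fun x => |ψ x|) volume 0 L := hiψ.abs
  have hiaψ' : IntervalIntegrable (fun x => |ψ' x|) volume 0 L := hiψ'.abs
  have hiaφ : IntervalIntegrable (fun x => |φ x|) volume 0 L := hiφ.abs
  have hA0 : 0 ≤ A := integral_nonneg hL.le (fun x _ => abs_nonneg _)
  have hB0 : 0 ≤ B := integral_nonneg hL.le (fun x _ => abs_nonneg _)
  have hC0 : 0 ≤ C := integral_nonneg hL.le (fun x _ => abs_nonneg _)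
  have hX0 : 0 ≤ X := integral_nonneg hL.le (fun x _ => sq_nonneg _)
  -- Step 1: integration by parts: X = -∫ φ ψ'
  have hparts : X = - ∫ x in (0:ℝ)..L, φ x * ψ' x := by
    have hp := integral_deriv_mul_eq_sub_of_hasDeriv_right (u := φ) (v := ψ)
      (u' := ψ) (v' := ψ') (a := 0) (b := L)
      (by rwa [huIcc]) (by rwa [huIcc])
      (fun x hx => by
        have hx' : x ∈ Ioo (0:ℝ) L := by simpa [hL.le] using hx
        exact ((hφd x (Ioo_subset_Icc_self hx')).hasDerivAt
          (Icc_mem_nhds hx'.1 hx'.2)).hasDerivWithinAt)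
      (fun x hx => by
        have hx' : x ∈ Ioo (0:ℝ) L := by simpa [hL.le] using hx
        exact ((hψd x (Ioo_subset_Icc_self hx')).hasDerivAt
          (Icc_mem_nhds hx'.1 hx'.2)).hasDerivWithinAt)
      hiψ hiψ'
    have hzero : φ L * ψ L - φ 0 * ψ 0 = 0 := by rw [hper, hper']; ring
    rw [hzero] at hp
    have hiψψ : IntervalIntegrable (fun x => ψ x * ψ x) volume 0 L := by
      apply ContinuousOn.intervalIntegrable; rw [huIcc]; exact hψc.mul hψc
    have hiφψ' : IntervalIntegrable (fun x => φ x * ψ' x) volume 0 L := by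
      apply ContinuousOn.intervalIntegrable; rw [huIcc]; exact hφc.mul hψ'c
    rw [integral_add hiψψ hiφψ'] at hp
    have h2 : X = ∫ x in (0:ℝ)..L, ψ x * ψ x := by
      rw [hX]; congr 1; ext x; ring
    rw [h2]; linarith
  -- Step 2: FTC: φ x = φ 0 + ∫ 0..x ψ for x ∈ I
  have hftc : ∀ x ∈ I, φ x - φ 0 = ∫ t in (0:ℝ)..x, ψ t := by
    intro x hx
    have hx0 : (0:ℝ) ≤ x := hx.1
    refine (integral_eq_sub_of_hasDeriv_right_of_le hx0
      (hφc.mono (Icc_subset_Icc le_rfl hx.2))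
      (fun t ht => ?_)
      (hiψ.mono_set (by rw [huIcc, uIcc_of_le hx0]; exact Icc_subset_Icc le_rfl hx.2))).symm
    have ht' : t ∈ Ioo (0:ℝ) L := ⟨ht.1, lt_of_lt_of_le ht.2 hx.2⟩
    exact ((hφd t (Ioo_subset_Icc_self ht')).hasDerivAt
      (Icc_mem_nhds ht'.1 ht'.2)).hasDerivWithinAt
  -- Step 3: sup bound via oscillation
  have hosc : ∀ x ∈ I, ∀ y ∈ I, |φ x| ≤ |φ y| + C := by
    intro x hx y hy
    have hdiff : φ x - φ y = ∫ t in y..x, ψ t := by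
      have h1 := hftc x hx
      have h2 := hftc y hy
      have h3 : (∫ t in (0:ℝ)..x, ψ t) - ∫ t in (0:ℝ)..y, ψ t = ∫ t in y..x, ψ t :=
        integral_interval_sub_left
          (hiψ.mono_set (by rw [huIcc, uIcc_of_le hx.1]; exact Icc_subset_Icc le_rfl hx.2))
          (hiψ.mono_set (by rw [huIcc, uIcc_of_le hy.1]; exact Icc_subset_Icc le_rfl hy.2))
      linarith
    have hbnd : |∫ t in y..x, ψ t| ≤ C := by
      rcases le_total y x with h | h
      · calc |∫ t in y..x, ψ t| ≤ ∫ t in y..x, |ψ t| :=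
              abs_integral_le_integral_abs h
          _ ≤ C := by
              apply integral_mono_interval hy.1 h hx.2
              · filter_upwards with t using abs_nonneg _
              · exact hiaψ
      · rw [integral_symm, abs_neg]
        calc |∫ t in x..y, ψ t| ≤ ∫ t in x..y, |ψ t| :=
              abs_integral_le_integral_abs h
          _ ≤ C := by
              apply integral_mono_interval hx.1 h hy.2
              · filter_upwards with t using abs_nonneg _
              · exact hiaψ
    calc |φ x| = |φ y + (φ x - φ y)| := by ring_nf
      _ ≤ |φ y| + |φ x - φ y| := abs_add_le _ _
      _ ≤ |φ y| + C := by rw [hdiff]; linarith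
  have hsup : ∀ x ∈ I, |φ x| ≤ B / L + C := by
    intro x hx
    have hmono : (∫ y in (0:ℝ)..L, |φ x|) ≤ ∫ y in (0:ℝ)..L, (|φ y| + C) := by
      apply integral_mono_on hL.le intervalIntegrable_const (hiaφ.add intervalIntegrable_const)
      intro y hy
      exact hosc x hx y hy
    rw [intervalIntegral.integral_const, integral_add hiaφ intervalIntegrable_const,
      intervalIntegral.integral_const] at hmono
    simp only [smul_eq_mul, sub_zero] at hmono
    rw [← hB] at hmono
    rw [← sub_nonneg]
    have heq : B / L + C - |φ x| = (B + L * C - L * |φ x|) / L := by field_simp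
    rw [heq]
    exact div_nonneg (by linarith) hL.le
  -- Step 4: C ≤ (t X + L / t)/2 for t > 0
  have hCX : ∀ t : ℝ, 0 < t → C ≤ (t * X + L / t) / 2 := by
    intro t ht
    have hisq : IntervalIntegrable (fun x => (ψ x)^2) volume 0 L := by
      apply ContinuousOn.intervalIntegrable; rw [huIcc]; exact hψc.pow 2
    have hmono : C ≤ ∫ x in (0:ℝ)..L, (t * (ψ x)^2 + 1/t) / 2 := by
      apply integral_mono_on hL.le hiaψ
      · exact ((hisq.const_mul t).add intervalIntegrable_const).div_const 2
      · intro x _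
        have key : 2 * t * |ψ x| ≤ t^2 * (ψ x)^2 + 1 := by
          nlinarith [sq_nonneg (t * |ψ x| - 1), sq_abs (ψ x)]
        rw [← sub_nonneg]
        have heq : (t * (ψ x)^2 + 1/t) / 2 - |ψ x|
            = (t^2 * (ψ x)^2 + 1 - 2*t*|ψ x|) / (2*t) := by field_simp
        rw [heq]
        apply div_nonneg (by linarith) (by linarith)
    have hcomp : (∫ x in (0:ℝ)..L, (t * (ψ x)^2 + 1/t) / 2) = (t * X + L / t) / 2 := by
      rw [intervalIntegral.integral_div, integral_add (hisq.const_mul t) intervalIntegrable_const,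
        intervalIntegral.integral_const_mul, intervalIntegral.integral_const]
      rw [hX]
      simp only [sub_zero, smul_eq_mul]
      ring
    linarith
  -- Step 5: X ≤ (B / L + C) * A
  have hmain : X ≤ (B / L + C) * A := by
    have h1 : X ≤ |∫ x in (0:ℝ)..L, φ x * ψ' x| := by
      rw [hparts]; exact neg_le_abs _
    have h2 : |∫ x in (0:ℝ)..L, φ x * ψ' x| ≤ ∫ x in (0:ℝ)..L, |φ x * ψ' x| :=
      abs_integral_le_integral_abs hL.le
    have hiabs : IntervalIntegrable (fun x => |φ x * ψ' x|) volume 0 L := by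
      apply ContinuousOn.intervalIntegrable; rw [huIcc]; exact (hφc.mul hψ'c).abs
    have h3 : (∫ x in (0:ℝ)..L, |φ x * ψ' x|) ≤ ∫ x in (0:ℝ)..L, (B / L + C) * |ψ' x| := by
      apply integral_mono_on hL.le hiabs (hiaψ'.const_mul _)
      intro x hx
      rw [abs_mul]
      exact mul_le_mul_of_nonneg_right (hsup x hx) (abs_nonneg _)
    rw [intervalIntegral.integral_const_mul] at h3
    linarith
  -- Step 6: conclude
  rcases eq_or_lt_of_le hA0 with hAz | hApos
  · have hXle : X ≤ 0 := by rw [← hAz, mul_zero] at hmain; exact hmain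
    have hz : L * A^2 + 4/L*B*A = 0 := by rw [← hAz]; ring
    linarith
  · have ht := hCX (1/A) (by positivity)
    have : X ≤ (B / L + ((1/A) * X + L / (1/A)) / 2) * A := by
      refine le_trans hmain (mul_le_mul_of_nonneg_right ?_ hA0)
      linarith
    have hexp : (B / L + ((1/A) * X + L / (1/A)) / 2) * A = B * A / L + X / 2 + L * A^2 / 2 := by
      field_simp
      ring
    rw [hexp] at this
    have hfin : X ≤ 2 * (B * A / L) + L * A^2 := by linarith
    have h4 : 2 * (B * A / L) ≤ (4 / L) * B * A := by
      rw [← sub_nonneg]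
      have heq : (4 / L) * B * A - 2 * (B * A / L) = (2 * B * A) / L := by field_simp; ring
      rw [heq]
      exact div_nonneg (by positivity) hL.le
    linarith
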